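/- Let $0<p<q<1$, $\rho=\frac{p(1-q)}{q(1-p)}$, and let $f:\{0,1\}^n\to\{0,1\}$ be monotone. Then $\mu_q(f)\ge\mu_p(f)^2/\mathrm{Stab}_\rho(f)$, where $\mathrm{Stab}_\rho(f)=\langle f,\mathrm{T}_\rho f\rangle_{\mu_p}$ is the $p$-biased noise stability. -/

import Mathlib

open Finset

/-- Weight of a point of the `p`-biased cube. -/
noncomputable def cubeWt {n : ℕ} (p : ℝ) (x : Fin n → Bool) : ℝ :=
  ∏ i, if x i then p else 1 - p

/-- Expectation with respect to the `p`-biased measure on `{0,1}ⁿ`. -/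
noncomputable def cubeE {n : ℕ} (p : ℝ) (f : (Fin n → Bool) → ℝ) : ℝ :=
  ∑ x : Fin n → Bool, cubeWt p x * f x

/-- The conditional law of `x` given `y` under the monotone coupling `D(p,q)`:
`downK p q a b = ℙ(x = a ∣ y = b)`. -/
noncomputable def downK (p q : ℝ) : Bool → Bool → ℝ
  | true, true => p / q
  | false, true => 1 - p / q
  | true, false => 0
  | false, false => 1

/-- The conditional law of `y` given `x` under the monotone coupling `D(p,q)`:
`upK p q b a = ℙ(y = b ∣ x = a)`. -/
noncomputable def upK (p q : ℝ) : Bool → Bool → ℝ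
  | true, true => 1
  | false, true => 0
  | true, false => (q - p) / (1 - p)
  | false, false => (1 - q) / (1 - p)

/-- The directed operator `T^{p→q} : L²(μ_p) → L²(μ_q)`,
`(T^{p→q} f)(y) = E[f(x) ∣ y]` for `(x,y) ∼ D(p,q)`. -/
noncomputable def Tpq {n : ℕ} (p q : ℝ) (f : (Fin n → Bool) → ℝ) :
    (Fin n → Bool) → ℝ :=
  fun y => ∑ x : Fin n → Bool, (∏ i, downK p q (x i) (y i)) * f x

/-- The adjoint directed operator `T^{q→p} = (T^{p→q})⋆`,
`(T^{q→p} g)(x) = E[g(y) ∣ x]` for `(x,y) ∼ D(p,q)`. -/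
noncomputable def Tqp {n : ℕ} (p q : ℝ) (g : (Fin n → Bool) → ℝ) :
    (Fin n → Bool) → ℝ :=
  fun x => ∑ y : Fin n → Bool, (∏ i, upK p q (y i) (x i)) * g y

/-- The one-bit kernel of the `p`-biased noise operator `T_ρ`:
`noiseK ρ p b a = ℙ(y = b ∣ x = a)` where `y = x` with probability `ρ` and
otherwise `y` is resampled `p`-biased. -/
noncomputable def noiseK (ρ p : ℝ) : Bool → Bool → ℝ :=
  fun b a => ρ * (if b = a then 1 else 0) + (1 - ρ) * (if b then p else 1 - p)

/-- The `p`-biased noise operator `T_ρ`. -/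
noncomputable def Tnoise {n : ℕ} (ρ p : ℝ) (f : (Fin n → Bool) → ℝ) :
    (Fin n → Bool) → ℝ :=
  fun x => ∑ y : Fin n → Bool, (∏ i, noiseK ρ p (y i) (x i)) * f y


section Aux

variable {p q : ℝ}

lemma bitBalance (hq0 : 0 < q) (hp1 : p < 1) (a b : Bool) :
    (if b then q else 1 - q) * downK p q a b
      = (if a then p else 1 - p) * upK p q b a := by
  have hq : q ≠ 0 := ne_of_gt hq0
  have hp : (1 : ℝ) - p ≠ 0 := by intro h; nlinarith
  cases a <;> cases b <;> simp [downK, upK] <;> field_simp <;> ring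

lemma bitUpRow (hp1 : p < 1) (a : Bool) :
    ∑ b : Bool, upK p q b a = 1 := by
  have hp : (1 : ℝ) - p ≠ 0 := by intro h; nlinarith
  rw [Fintype.sum_bool]
  cases a <;> simp [upK] <;> field_simp <;> ring

lemma bitCompose (hq0 : 0 < q) (hp1 : p < 1) (a' a : Bool) :
    ∑ b : Bool, upK p q b a * downK p q a' b
      = noiseK (p * (1 - q) / (q * (1 - p))) p a' a := by
  have hq : q ≠ 0 := ne_of_gt hq0
  have hp : (1 : ℝ) - p ≠ 0 := by intro h; nlinarith
  cases a <;> cases a' <;> simp [upK, downK, noiseK] <;> field_simp <;> ring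

lemma sumProdExchange {n : ℕ} (g : Fin n → Bool → ℝ) :
    ∑ y : Fin n → Bool, ∏ i, g i (y i) = ∏ i, ∑ b : Bool, g i b :=
  (Fintype.prod_sum g).symm

lemma wtBalance (hq0 : 0 < q) (hp1 : p < 1) {n : ℕ} (x y : Fin n → Bool) :
    cubeWt q y * ∏ i, downK p q (x i) (y i)
      = cubeWt p x * ∏ i, upK p q (y i) (x i) := by
  unfold cubeWt
  rw [← Finset.prod_mul_distrib, ← Finset.prod_mul_distrib]
  exact Finset.prod_congr rfl fun i _ => bitBalance hq0 hp1 (x i) (y i)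

lemma sumUpOne (hp1 : p < 1) {n : ℕ} (x : Fin n → Bool) :
    ∑ y : Fin n → Bool, ∏ i, upK p q (y i) (x i) = 1 := by
  rw [sumProdExchange (fun i b => upK p q b (x i))]
  exact Finset.prod_eq_one fun i _ => bitUpRow hp1 (x i)

lemma prodCompose (hq0 : 0 < q) (hp1 : p < 1) {n : ℕ} (x x' : Fin n → Bool) :
    ∑ y : Fin n → Bool, (∏ i, upK p q (y i) (x i)) * ∏ i, downK p q (x' i) (y i)
      = ∏ i, noiseK (p * (1 - q) / (q * (1 - p))) p (x' i) (x i) := by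
  have : ∀ y : Fin n → Bool,
      (∏ i, upK p q (y i) (x i)) * ∏ i, downK p q (x' i) (y i)
        = ∏ i, upK p q (y i) (x i) * downK p q (x' i) (y i) := fun y =>
    (Finset.prod_mul_distrib).symm
  rw [Finset.sum_congr rfl fun y _ => this y,
    sumProdExchange (fun i b => upK p q b (x i) * downK p q (x' i) b)]
  exact Finset.prod_congr rfl fun i _ => bitCompose hq0 hp1 (x' i) (x i)

lemma upSupport (hp0 : 0 < p) (hpq : p < q) (hq1 : q < 1) {n : ℕ}
    {x y : Fin n → Bool} (h : (∏ i, upK p q (y i) (x i)) ≠ 0) :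
    ∀ i, x i = true → y i = true := by
  intro i hx
  by_contra hy
  have hy' : y i = false := by simpa using hy
  have : upK p q (y i) (x i) = 0 := by rw [hx, hy']; simp [upK]
  exact h (Finset.prod_eq_zero (Finset.mem_univ i) this)

lemma upNonneg (hp0 : 0 < p) (hpq : p < q) (hq1 : q < 1) (b a : Bool) :
    0 ≤ upK p q b a := by
  have hp : (0:ℝ) < 1 - p := by linarith
  cases a <;> cases b <;> simp [upK] <;>
    first
      | rfl
      | exact div_nonneg (by linarith) (by linarith)

lemma cubeWtNonneg {n : ℕ} (hp0 : 0 < p) (hp1 : p < 1) (x : Fin n → Bool) :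
    0 ≤ cubeWt p x := by
  unfold cubeWt
  apply Finset.prod_nonneg
  intro i _
  cases x i <;> simp <;> linarith

end Aux

theorem stmt14 {n : ℕ} (p q : ℝ) (hp0 : 0 < p) (hpq : p < q) (hq1 : q < 1)
    (f : (Fin n → Bool) → ℝ) (hBool : ∀ x, f x = 0 ∨ f x = 1)
    (hmono : ∀ x y : Fin n → Bool, (∀ i, x i = true → y i = true) → f x ≤ f y) :
    (cubeE p f) ^ 2 /
        cubeE p (fun x => f x * Tnoise (p * (1 - q) / (q * (1 - p))) p f x) ≤
      cubeE q f := by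
  have hq0 : 0 < q := lt_trans hp0 hpq
  have hp1 : p < 1 := lt_trans hpq hq1
  set ρ : ℝ := p * (1 - q) / (q * (1 - p)) with hρ
  -- boolean facts
  have hfsq : ∀ x, f x ^ 2 = f x := by
    intro x; rcases hBool x with h | h <;> rw [h] <;> ring
  have hfnn : ∀ x, 0 ≤ f x := by
    intro x; rcases hBool x with h | h <;> rw [h] <;> norm_num
  -- key support fact: f x * f y = f x on the coupling support
  have hfxy : ∀ x y : Fin n → Bool,
      (∏ i, upK p q (y i) (x i)) * (f x * f y)
        = (∏ i, upK p q (y i) (x i)) * f x := by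
    intro x y
    by_cases h : (∏ i, upK p q (y i) (x i)) = 0
    · rw [h]; ring
    · congr 1
      have hle := hmono x y (upSupport hp0 hpq hq1 h)
      rcases hBool x with h0 | h1
      · rw [h0]; ring
      · rcases hBool y with hy0 | hy1
        · exfalso; rw [h1, hy0] at hle; linarith
        · rw [h1, hy1]; ring
  -- Step 1 : ⟨T^{p→q} f, f⟩_{μ_q} = μ_p(f)
  have hA : (∑ y : Fin n → Bool, cubeWt q y * (Tpq p q f y * f y)) = cubeE p f := by
    have step1 : ∀ y : Fin n → Bool, cubeWt q y * (Tpq p q f y * f y)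
        = ∑ x : Fin n → Bool,
            (cubeWt p x * ∏ i, upK p q (y i) (x i)) * (f x * f y) := by
      intro y
      unfold Tpq
      rw [Finset.sum_mul, Finset.mul_sum]
      refine Finset.sum_congr rfl fun x _ => ?_
      calc cubeWt q y * ((∏ i, downK p q (x i) (y i)) * f x * f y)
          = (cubeWt q y * ∏ i, downK p q (x i) (y i)) * (f x * f y) := by ring
        _ = (cubeWt p x * ∏ i, upK p q (y i) (x i)) * (f x * f y) := by
            rw [wtBalance hq0 hp1]
    rw [Finset.sum_congr rfl fun y _ => step1 y, Finset.sum_comm]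
    unfold cubeE
    refine Finset.sum_congr rfl fun x _ => ?_
    have inner : ∀ y : Fin n → Bool,
        (cubeWt p x * ∏ i, upK p q (y i) (x i)) * (f x * f y)
          = (cubeWt p x * f x) * ∏ i, upK p q (y i) (x i) := by
      intro y
      calc (cubeWt p x * ∏ i, upK p q (y i) (x i)) * (f x * f y)
          = cubeWt p x * ((∏ i, upK p q (y i) (x i)) * (f x * f y)) := by ring
        _ = cubeWt p x * ((∏ i, upK p q (y i) (x i)) * f x) := by rw [hfxy]
        _ = (cubeWt p x * f x) * ∏ i, upK p q (y i) (x i) := by ring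
    rw [Finset.sum_congr rfl fun y _ => inner y, ← Finset.mul_sum,
      sumUpOne hp1 x, mul_one]
  -- Step 2 : ‖T^{p→q} f‖²_{μ_q} = ⟨f, T_ρ f⟩_{μ_p}
  have hB : (∑ y : Fin n → Bool, cubeWt q y * (Tpq p q f y) ^ 2)
      = cubeE p (fun x => f x * Tnoise ρ p f x) := by
    have step2 : ∀ y : Fin n → Bool, cubeWt q y * (Tpq p q f y) ^ 2
        = ∑ x : Fin n → Bool, ∑ x' : Fin n → Bool,
            ((cubeWt p x * ((∏ i, upK p q (y i) (x i)) *
              ∏ i, downK p q (x' i) (y i))) * (f x * f x')) := by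
      intro y
      unfold Tpq
      rw [sq, Finset.sum_mul_sum, Finset.mul_sum]
      refine Finset.sum_congr rfl fun x _ => ?_
      rw [Finset.mul_sum]
      refine Finset.sum_congr rfl fun x' _ => ?_
      calc cubeWt q y * ((∏ i, downK p q (x i) (y i)) * f x *
              ((∏ i, downK p q (x' i) (y i)) * f x'))
          = ((cubeWt q y * ∏ i, downK p q (x i) (y i)) *
              (∏ i, downK p q (x' i) (y i))) * (f x * f x') := by ring
        _ = ((cubeWt p x * ∏ i, upK p q (y i) (x i)) *
              (∏ i, downK p q (x' i) (y i))) * (f x * f x') := by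
            rw [wtBalance hq0 hp1]
        _ = (cubeWt p x * ((∏ i, upK p q (y i) (x i)) *
              ∏ i, downK p q (x' i) (y i))) * (f x * f x') := by ring
    rw [Finset.sum_congr rfl fun y _ => step2 y, Finset.sum_comm]
    unfold cubeE Tnoise
    refine Finset.sum_congr rfl fun x _ => ?_
    rw [Finset.sum_comm]
    have inner : ∀ x' : Fin n → Bool,
        (∑ y : Fin n → Bool,
          (cubeWt p x * ((∏ i, upK p q (y i) (x i)) *
            ∏ i, downK p q (x' i) (y i))) * (f x * f x'))
          = cubeWt p x * (f x * ((∏ i, noiseK ρ p (x' i) (x i)) * f x')) := by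
      intro x'
      have : ∀ y : Fin n → Bool,
          (cubeWt p x * ((∏ i, upK p q (y i) (x i)) *
            ∏ i, downK p q (x' i) (y i))) * (f x * f x')
            = (cubeWt p x * (f x * f x')) *
              ((∏ i, upK p q (y i) (x i)) * ∏ i, downK p q (x' i) (y i)) := by
        intro y; ring
      rw [Finset.sum_congr rfl fun y _ => this y, ← Finset.mul_sum,
        prodCompose hq0 hp1 x x']
      ring
    rw [Finset.sum_congr rfl fun x' _ => inner x', ← Finset.mul_sum,
      ← Finset.mul_sum]
  -- Step 3 : Cauchy–Schwarz in L²(μ_q)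
  have hCS : (∑ y : Fin n → Bool, cubeWt q y * (Tpq p q f y * f y)) ^ 2
      ≤ (∑ y : Fin n → Bool, cubeWt q y * (Tpq p q f y) ^ 2) * cubeE q f := by
    have hq1' : (0:ℝ) < 1 := one_pos
    have key := Finset.sum_mul_sq_le_sq_mul_sq Finset.univ
      (fun y : Fin n → Bool => Real.sqrt (cubeWt q y) * Tpq p q f y)
      (fun y : Fin n → Bool => Real.sqrt (cubeWt q y) * f y)
    have hw : ∀ y : Fin n → Bool,
        Real.sqrt (cubeWt q y) * Real.sqrt (cubeWt q y) = cubeWt q y :=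
      fun y => Real.mul_self_sqrt (cubeWtNonneg hq0 hq1 y)
    have e1 : ∀ y : Fin n → Bool,
        (Real.sqrt (cubeWt q y) * Tpq p q f y) * (Real.sqrt (cubeWt q y) * f y)
          = cubeWt q y * (Tpq p q f y * f y) := by
      intro y; rw [show (Real.sqrt (cubeWt q y) * Tpq p q f y) *
        (Real.sqrt (cubeWt q y) * f y)
          = (Real.sqrt (cubeWt q y) * Real.sqrt (cubeWt q y)) *
            (Tpq p q f y * f y) by ring, hw]
    have e2 : ∀ y : Fin n → Bool,
        (Real.sqrt (cubeWt q y) * Tpq p q f y) ^ 2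
          = cubeWt q y * (Tpq p q f y) ^ 2 := by
      intro y; rw [show (Real.sqrt (cubeWt q y) * Tpq p q f y) ^ 2
          = (Real.sqrt (cubeWt q y) * Real.sqrt (cubeWt q y)) *
            (Tpq p q f y) ^ 2 by ring, hw]
    have e3 : ∀ y : Fin n → Bool,
        (Real.sqrt (cubeWt q y) * f y) ^ 2 = cubeWt q y * f y := by
      intro y; rw [show (Real.sqrt (cubeWt q y) * f y) ^ 2
          = (Real.sqrt (cubeWt q y) * Real.sqrt (cubeWt q y)) * f y ^ 2 by ring,
        hw, hfsq]
    rw [Finset.sum_congr rfl fun y _ => e1 y,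
      Finset.sum_congr rfl fun y _ => e2 y,
      Finset.sum_congr rfl fun y _ => e3 y] at key
    exact key
  -- Assemble
  have hmain : (cubeE p f) ^ 2
      ≤ cubeE p (fun x => f x * Tnoise ρ p f x) * cubeE q f := by
    rw [← hA, ← hB]; exact hCS
  have hSnn : 0 ≤ cubeE p (fun x => f x * Tnoise ρ p f x) := by
    rw [← hB]
    exact Finset.sum_nonneg fun y _ =>
      mul_nonneg (cubeWtNonneg hq0 hq1 y) (sq_nonneg _)
  have hQnn : 0 ≤ cubeE q f :=
    Finset.sum_nonneg fun x _ =>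
      mul_nonneg (cubeWtNonneg hq0 hq1 x) (hfnn x)
  rcases eq_or_lt_of_le hSnn with hS0 | hSpos
  · rw [← hS0]; simpa using hQnn
  · rw [div_le_iff₀ hSpos]
    linarith [hmain]
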